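/- For every p ∈ ℕ^ℕ, let DIS|_[p] denote the restriction of the discontinuity problem DIS to the Turing cone [p] := {q ∈ ℕ^ℕ : p ≤_T q} (i.e., dom(DIS|_[p]) = [p] and DIS|_[p](q) = DIS(q) for q ∈ [p]). Then DIS ≤*_W DIS|_[p]; in particular DIS|_[p] is effectively discontinuous. -/
import Mathlib


noncomputable section

/-- Baire space `ℕ^ℕ`. -/
abbrev Baire : Type := ℕ → ℕ

/-- The Cantor pairing `⟨n,k⟩ = (n+k)(n+k+1)/2 + k`. -/
def cpair (n k : ℕ) : ℕ := (n + k) * (n + k + 1) / 2 + k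

/-- The inverse of the Cantor pairing. -/
noncomputable def cunpair (m : ℕ) : ℕ × ℕ :=
  Classical.epsilon fun x : ℕ × ℕ => cpair x.1 x.2 = m

/-- A fixed bijective numbering `w : ℕ → List ℕ` of finite words. -/
def word (n : ℕ) : List ℕ := Denumerable.ofNat (List ℕ) n

/-- `l` is a finite prefix of the infinite sequence `p`. -/
def IsPrefixOf (l : List ℕ) (p : Baire) : Prop := l = (List.range l.length).map p

/-- Two words are comparable in the prefix order. -/
def WordComparable (u v : List ℕ) : Prop := u <+: v ∨ v <+: u

/-- The word `w(n_i)` decoded from the `i`-th entry of the code `q`. -/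
noncomputable def wn (q : Baire) (i : ℕ) : List ℕ := word (cunpair (q i)).1

/-- The word `w(k_i)` decoded from the `i`-th entry of the code `q`. -/
noncomputable def wk (q : Baire) (i : ℕ) : List ℕ := word (cunpair (q i)).2

/-- The code `q` is consistent. -/
def ConsistentCode (q : Baire) : Prop :=
  ∀ i j, WordComparable (wn q i) (wn q j) → WordComparable (wk q i) (wk q j)

/-- The continuous partial function `Φ_q :⊆ ℕ^ℕ → ℕ^ℕ` coded by `q`. -/
noncomputable def Phi (q : Baire) : Baire →. Baire := fun p =>
  ⟨ConsistentCode q ∧ ∀ m : ℕ, ∃ i, IsPrefixOf (wn q i) p ∧ m < (wk q i).length,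
   fun _ => Classical.epsilon fun x : Baire =>
      ∀ i, IsPrefixOf (wn q i) p → IsPrefixOf (wk q i) x⟩

/-- The pairing `⟨q,p⟩` on Baire space. -/
def bpair (q p : Baire) : Baire := fun n => if n % 2 = 0 then q (n / 2) else p (n / 2)

/-- Even part of a sequence. -/
def evens (r : Baire) : Baire := fun n => r (2 * n)

/-- Odd part of a sequence. -/
def odds (r : Baire) : Baire := fun n => r (2 * n + 1)

/-- The universal function `U(⟨q,p⟩) = Φ_q(p)`. -/
noncomputable def U : Baire →. Baire := fun r => Phi (evens r) (odds r)

/-- `h` is monotone for the prefix order. -/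
def MonotoneWord (h : List ℕ → List ℕ) : Prop := ∀ u v, u <+: v → h u <+: h v

/-- `h` approximates the partial function `F`. -/
def Approximates (h : List ℕ → List ℕ) (F : Baire →. Baire) : Prop :=
  ∀ p, ∀ hp : (F p).Dom,
    (∀ v, IsPrefixOf v p → IsPrefixOf (h v) ((F p).get hp)) ∧
    (∀ m : ℕ, ∃ v, IsPrefixOf v p ∧ m < (h v).length)

/-- `F :⊆ ℕ^ℕ → ℕ^ℕ` is continuous: some monotone word function approximates it. -/
def ContinuousPF (F : Baire →. Baire) : Prop := ∃ h, MonotoneWord h ∧ Approximates h F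

/-- `F :⊆ ℕ^ℕ → ℕ^ℕ` is computable: some computable monotone word function approximates it. -/
def ComputablePF (F : Baire →. Baire) : Prop :=
  ∃ h, Computable h ∧ MonotoneWord h ∧ Approximates h F

/-- A total function is computable iff it is computable as a partial function with full domain. -/
def ComputableTotal (F : Baire → Baire) : Prop := ComputablePF fun p => Part.some (F p)

/-- A problem (multivalued function on Baire space). -/
abbrev Problem : Type := Baire → Set Baire

/-- `F` is a realizer of the problem `f`. -/
def Realizes (F : Baire →. Baire) (f : Problem) : Prop :=
  ∀ p, (f p).Nonempty → ∃ h : (F p).Dom, (F p).get h ∈ f p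

/-- `f` is continuous: it has a continuous realizer. -/
def ContinuousProblem (f : Problem) : Prop := ∃ F, ContinuousPF F ∧ Realizes F f

/-- The discontinuity problem `DIS`. -/
noncomputable def DIS : Problem := fun p => {q | q ∉ U p}

/-- `D` is a discontinuity function for `f`. -/
def DiscontinuityFunction (D : Baire → Baire) (f : Problem) : Prop :=
  ∀ q, (f (D q)).Nonempty ∧ ∀ y ∈ Phi q (D q), y ∉ f (D q)

/-- `f` is computably discontinuous. -/
def ComputablyDiscontinuous (f : Problem) : Prop :=
  ∃ D, ComputableTotal D ∧ DiscontinuityFunction D f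

/-- `f` is effectively discontinuous. -/
def EffectivelyDiscontinuous (f : Problem) : Prop :=
  ∃ D : Baire → Baire, Continuous D ∧ DiscontinuityFunction D f

/-- Weihrauch reducibility `f ≤_W g`. -/
def WeihrauchRed (f g : Problem) : Prop :=
  ∃ H K : Baire →. Baire, ComputablePF H ∧ ComputablePF K ∧
    ∀ G : Baire →. Baire, Realizes G g →
      Realizes (fun p => (K p).bind fun s => (G s).bind fun t => H (bpair p t)) f

/-- Strong Weihrauch reducibility `f ≤_sW g`. -/
def StrongWeihrauchRed (f g : Problem) : Prop :=
  ∃ H K : Baire →. Baire, ComputablePF H ∧ ComputablePF K ∧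
    ∀ G : Baire →. Baire, Realizes G g →
      Realizes (fun p => (K p).bind fun s => (G s).bind fun t => H t) f

/-- Continuous Weihrauch reducibility `f ≤*_W g`. -/
def ContWeihrauchRed (f g : Problem) : Prop :=
  ∃ H K : Baire →. Baire, ContinuousPF H ∧ ContinuousPF K ∧
    ∀ G : Baire →. Baire, Realizes G g →
      Realizes (fun p => (K p).bind fun s => (G s).bind fun t => H (bpair p t)) f

/-- Continuous strong Weihrauch reducibility `f ≤*_sW g`. -/
def ContStrongWeihrauchRed (f g : Problem) : Prop :=
  ∃ H K : Baire →. Baire, ContinuousPF H ∧ ContinuousPF K ∧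
    ∀ G : Baire →. Baire, Realizes G g →
      Realizes (fun p => (K p).bind fun s => (G s).bind fun t => H t) f

/-- Concatenation of the first `n` moves. -/
def concatN (ms : ℕ → List ℕ) (n : ℕ) : List ℕ := ((List.range n).map ms).flatten

/-- The concatenated play is infinite. -/
def PlayInf (ms : ℕ → List ℕ) : Prop := ∀ m : ℕ, ∃ n, m < (concatN ms n).length

/-- The infinite sequence determined by an infinite play. -/
noncomputable def playLim (ms : ℕ → List ℕ) : Baire :=
  Classical.epsilon fun p : Baire => ∀ n, IsPrefixOf (concatN ms n) p

/-- Player II wins the run of the Wadge game of `f` given by the moves `xs` of I and `ys` of II. -/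
def WadgeIIWins (f : Problem) (xs ys : ℕ → List ℕ) : Prop :=
  (PlayInf xs ∧ (f (playLim xs)).Nonempty) → (PlayInf ys ∧ playLim ys ∈ f (playLim xs))

/-- The list of first `n` moves. -/
def histW (xs : ℕ → List ℕ) (n : ℕ) : List (List ℕ) := (List.range n).map xs

/-- `σ` is a winning strategy for Player II in the Wadge game of `f`. -/
def WadgeWinningII (f : Problem) (σ : List (List ℕ) → List ℕ) : Prop :=
  ∀ xs : ℕ → List ℕ, WadgeIIWins f xs fun i => σ (histW xs (i + 1))

/-- `σ` is a winning strategy for Player I in the Wadge game of `f`. -/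
def WadgeWinningI (f : Problem) (σ : List (List ℕ) → List ℕ) : Prop :=
  ∀ ys : ℕ → List ℕ, ¬ WadgeIIWins f (fun i => σ (histW ys i)) ys

/-- The list of first `n` values of a sequence. -/
def histN (x : Baire) (n : ℕ) : List ℕ := (List.range n).map x

/-- Player II wins the run `(x,y)` of the Lipschitz game of `f`. -/
def LipIIWins (f : Problem) (x y : Baire) : Prop := (f x).Nonempty → y ∈ f x

/-- `σ` is a winning strategy for Player II in the Lipschitz game of `f`. -/
def LipWinningII (f : Problem) (σ : List ℕ → ℕ) : Prop :=
  ∀ x : Baire, LipIIWins f x fun i => σ (histN x (i + 1))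

/-- `σ` is a winning strategy for Player I in the Lipschitz game of `f`. -/
def LipWinningI (f : Problem) (σ : List ℕ → ℕ) : Prop :=
  ∀ y : Baire, ¬ LipIIWins f (fun i => σ (histN y i)) y

/-- `σ` is a winning strategy for Player II in the Gale–Stewart game `A`. -/
def GSWinningII (A : Set Baire) (σ : List ℕ → ℕ) : Prop :=
  ∀ x : Baire, bpair x (fun i => σ (histN x (i + 1))) ∈ A

/-- `σ` is a winning strategy for Player I in the Gale–Stewart game `A`. -/
def GSWinningI (A : Set Baire) (σ : List ℕ → ℕ) : Prop :=
  ∀ y : Baire, bpair (fun i => σ (histN y i)) y ∉ A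

/-- The totalization `Tf` of `f`. -/
def Totalization (f : Problem) : Problem := fun p => {q | (f p).Nonempty → q ∈ f p}

/-- The paired graph `⟨graph(Tf)⟩ ⊆ ℕ^ℕ`. -/
def pairedGraph (f : Problem) : Set Baire :=
  {r | ∃ x y : Baire, r = bpair x y ∧ y ∈ Totalization f x}

/-- Domain of the word concatenation map `w*`. -/
def wstarDom (p : Baire) : Prop := PlayInf fun i => word (p i)

/-- The word concatenation map `w* : p ↦ w(p 0) w(p 1) ⋯` (on its domain). -/
noncomputable def wstar (p : Baire) : Baire := playLim fun i => word (p i)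

/-- The problem `f^w = w*⁻¹ ∘ f ∘ w*`. -/
noncomputable def wordLift (f : Problem) : Problem := fun p =>
  {q | wstarDom p ∧ (f (wstar p)).Nonempty ∧ wstarDom q ∧ wstar q ∈ f (wstar p)}

/-- The `i`-th component of a tupled sequence. -/
def tupleComp (p : Baire) (i : ℕ) : Baire := fun n => p (cpair i n)

/-- The parallelization `⟨f⟩` of `f`. -/
def Parallelization (f : Problem) : Problem := fun p =>
  {q | ∀ i, tupleComp q i ∈ f (tupleComp p i)}

/-- Turing reducibility: `p` is computable relative to the oracle `q`. -/
def TuringLe (p q : Baire) : Prop := ∃ F : Baire →. Baire, ComputablePF F ∧ p ∈ F q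

end

noncomputable section Aux

open List

/-! ### Pairing arithmetic -/

lemma two_mul_tri (t : ℕ) : 2 * (t * (t + 1) / 2) = t * (t + 1) :=
  Nat.mul_div_cancel' ((Nat.even_mul_succ_self t).two_dvd)

lemma cpair_inj {a b c d : ℕ} (h : cpair a b = cpair c d) : a = c ∧ b = d := by
  unfold cpair at h
  have hs : a + b = c + d := by
    by_contra hne
    rcases Nat.lt_or_ge (a + b) (c + d) with hlt | hge
    · have h1 := two_mul_tri (a + b)
      have h2 := two_mul_tri (a + b + 1)
      have h3 : (a + b) * (a + b + 1) / 2 + (a+b) + 1 ≤ (a + b + 1) * (a + b + 1 + 1) / 2 := by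
        nlinarith [h1, h2]
      have h4 : (a + b + 1) * (a + b + 1 + 1) / 2 ≤ (c + d) * (c + d + 1) / 2 := by
        apply Nat.div_le_div_right
        apply Nat.mul_le_mul <;> omega
      omega
    · have hlt : c + d < a + b := by omega
      have h1 := two_mul_tri (c + d)
      have h2 := two_mul_tri (c + d + 1)
      have h3 : (c + d) * (c + d + 1) / 2 + (c+d) + 1 ≤ (c + d + 1) * (c + d + 1 + 1) / 2 := by
        nlinarith [h1, h2]
      have h4 : (c + d + 1) * (c + d + 1 + 1) / 2 ≤ (a + b) * (a + b + 1) / 2 := by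
        apply Nat.div_le_div_right
        apply Nat.mul_le_mul <;> omega
      omega
  rw [hs] at h
  omega

lemma cunpair_cpair (a b : ℕ) : cunpair (cpair a b) = (a, b) := by
  have h := Classical.epsilon_spec (p := fun x : ℕ × ℕ => cpair x.1 x.2 = cpair a b)
    ⟨(a, b), rfl⟩
  obtain ⟨h1, h2⟩ := cpair_inj h
  unfold cunpair
  exact Prod.ext h1 h2

/-- Inverse of the triangle map `t ↦ cpair t 0`. -/
def invtri (e : ℕ) : ℕ := (Nat.sqrt (8 * e + 1) - 1) / 2

lemma invtri_cpair (t : ℕ) : invtri (cpair t 0) = t := by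
  have h0 : cpair t 0 = t * (t + 1) / 2 := by unfold cpair; ring_nf
  have h1 : 8 * (t * (t + 1) / 2) + 1 = (2 * t + 1) * (2 * t + 1) := by
    have := two_mul_tri t; nlinarith
  unfold invtri
  rw [h0, h1, Nat.sqrt_eq]
  omega

lemma word_zero : word 0 = [] := by
  simp only [word]
  simp

/-! ### Prefix lemmas -/

lemma isPrefixOf_nil (x : Baire) : IsPrefixOf [] x := by simp [IsPrefixOf]

lemma wordComparable_nil_left (u : List ℕ) : WordComparable [] u := Or.inl (nil_prefix)

lemma wordComparable_nil_right (u : List ℕ) : WordComparable u [] := Or.inr (nil_prefix)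

lemma mapRange_prefix {a b : ℕ} {f g : ℕ → ℕ} (hab : a ≤ b) (h : ∀ n < a, f n = g n) :
    (List.range a).map f <+: (List.range b).map g := by
  have h1 : (List.range a).map f = (List.range a).map g :=
    List.map_congr_left fun n hn => h n (List.mem_range.mp hn)
  rw [h1]
  apply List.IsPrefix.map
  have : List.range a = (List.range b).take a := by
    rw [List.take_range, Nat.min_eq_left hab]
  rw [this]
  exact List.take_prefix _ _

lemma isPrefixOf_mapRange {L : ℕ} {f : ℕ → ℕ} {x : Baire} (h : ∀ n < L, f n = x n) :
    IsPrefixOf ((List.range L).map f) x := by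
  unfold IsPrefixOf
  simp only [List.length_map, List.length_range]
  exact List.map_congr_left fun n hn => h n (List.mem_range.mp hn)

lemma IsPrefixOf.getD_eq {v : List ℕ} {x : Baire} (h : IsPrefixOf v x) {i : ℕ}
    (hi : i < v.length) : v.getD i 0 = x i := by
  conv_lhs => rw [h]
  rw [List.getD_eq_getElem _ _ (by simpa using hi)]
  simp

lemma listPrefix_getD {u v : List ℕ} (h : u <+: v) {i : ℕ} (hi : i < u.length) :
    u.getD i 0 = v.getD i 0 := by
  rw [List.getD_eq_getElem _ _ hi, List.getD_eq_getElem _ _ (lt_of_lt_of_le hi h.length_le)]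
  exact h.getElem hi

lemma prefix_trans_isPrefixOf {u v : List ℕ} {x : Baire} (huv : u <+: v)
    (h : IsPrefixOf v x) : IsPrefixOf u x := by
  have hl : u.length ≤ v.length := huv.length_le
  unfold IsPrefixOf
  apply List.ext_getElem (by simp)
  intro i h1 h2
  have e1 : u[i] = v[i]'(lt_of_lt_of_le h1 hl) := huv.getElem h1
  have e2 : v[i]'(lt_of_lt_of_le h1 hl) = x i := by
    rw [List.getElem_of_eq h (lt_of_lt_of_le h1 hl)]
    simp
  simp only [e1, e2]
  simp

lemma prefixes_comparable {u v : List ℕ} {x : Baire} (hu : IsPrefixOf u x)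
    (hv : IsPrefixOf v x) : WordComparable u v := by
  rcases le_total u.length v.length with h | h
  · exact Or.inl (by rw [hu, hv]; exact mapRange_prefix h fun _ _ => rfl)
  · exact Or.inr (by rw [hv, hu]; exact mapRange_prefix h fun _ _ => rfl)

end Aux
noncomputable section Aux2

/-! ### bpair / evens / odds / fixp -/

lemma bpair_even (a b : Baire) (i : ℕ) : bpair a b (2 * i) = a i := by
  have h1 : 2 * i % 2 = 0 := by omega
  have h2 : 2 * i / 2 = i := by omega
  simp [bpair, h1, h2]

lemma bpair_odd (a b : Baire) (i : ℕ) : bpair a b (2 * i + 1) = b i := by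
  have h1 : ¬((2 * i + 1) % 2 = 0) := by omega
  have h2 : (2 * i + 1) / 2 = i := by omega
  simp [bpair, h1, h2]

lemma evens_bpair (a b : Baire) : evens (bpair a b) = a :=
  funext fun n => by rw [evens, bpair_even]

lemma odds_bpair (a b : Baire) : odds (bpair a b) = b :=
  funext fun n => by rw [odds, bpair_odd]

/-- The diagonal fixed point: `fixp r (2n) = r n`, `fixp r (2n+1) = fixp r n`. -/
def fixp (r : Baire) : ℕ → ℕ
  | n => if h : n % 2 = 0 then r (n / 2) else fixp r (n / 2)
  decreasing_by exact Nat.div_lt_self (by omega) (by omega)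

lemma fixp_even {r : Baire} {n : ℕ} (h : n % 2 = 0) : fixp r n = r (n / 2) := by
  rw [fixp]; simp [h]

lemma fixp_odd {r : Baire} {n : ℕ} (h : ¬ n % 2 = 0) : fixp r n = fixp r (n / 2) := by
  rw [fixp]; simp [h]

lemma evens_fixp (r : Baire) : evens (fixp r) = r := by
  funext n
  have h : 2 * n % 2 = 0 := by omega
  rw [evens, fixp_even h]
  congr 1
  omega

lemma odds_fixp (r : Baire) : odds (fixp r) = fixp r := by
  funext n
  have h : ¬ (2 * n + 1) % 2 = 0 := by omega
  rw [odds, fixp_odd h]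
  congr 1
  omega

lemma fixp_coord (n : ℕ) : ∃ m, ∀ r : Baire, fixp r n = r m := by
  induction n using Nat.strong_induction_on with
  | _ n ih =>
    by_cases h : n % 2 = 0
    · exact ⟨n / 2, fun r => fixp_even h⟩
    · obtain ⟨m, hm⟩ := ih (n / 2) (Nat.div_lt_self (by omega) (by omega))
      exact ⟨m, fun r => (fixp_odd h).trans (hm r)⟩

/-! ### Phi entry lemmas -/

lemma wn_bpair_even (q c : Baire) (i : ℕ) : wn (bpair q c) (2 * i) = wn q i := by
  unfold wn; rw [bpair_even]

lemma wk_bpair_even (q c : Baire) (i : ℕ) : wk (bpair q c) (2 * i) = wk q i := by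
  unfold wk; rw [bpair_even]

lemma wn_bpair_odd (q c : Baire) (i : ℕ) : wn (bpair q c) (2 * i + 1) = wn c i := by
  unfold wn; rw [bpair_odd]

lemma wk_bpair_odd (q c : Baire) (i : ℕ) : wk (bpair q c) (2 * i + 1) = wk c i := by
  unfold wk; rw [bpair_odd]

lemma parity_cases (m : ℕ) : (∃ i, m = 2 * i) ∨ (∃ i, m = 2 * i + 1) := by
  rcases Nat.even_or_odd m with ⟨i, hi⟩ | ⟨i, hi⟩
  · exact Or.inl ⟨i, by omega⟩
  · exact Or.inr ⟨i, by omega⟩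

/-- Adding "inert" entries (whose output word is empty) to a code does not change `Φ`. -/
lemma Phi_bpair_inert (q c x : Baire) (hc : ∀ n, wk c n = []) :
    Phi (bpair q c) x = Phi q x := by
  apply Part.ext'
  · show (ConsistentCode (bpair q c) ∧ _) ↔ (ConsistentCode q ∧ _)
    constructor
    · rintro ⟨h1, h2⟩
      refine ⟨fun i j hij => ?_, fun m => ?_⟩
      · have := h1 (2 * i) (2 * j)
        rw [wn_bpair_even, wn_bpair_even, wk_bpair_even, wk_bpair_even] at this
        exact this hij
      · obtain ⟨i, hi1, hi2⟩ := h2 m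
        rcases parity_cases i with ⟨a, rfl⟩ | ⟨a, rfl⟩
        · rw [wn_bpair_even] at hi1; rw [wk_bpair_even] at hi2
          exact ⟨a, hi1, hi2⟩
        · rw [wk_bpair_odd, hc] at hi2
          simp at hi2
    · rintro ⟨h1, h2⟩
      refine ⟨fun i j hij => ?_, fun m => ?_⟩
      · rcases parity_cases i with ⟨a, rfl⟩ | ⟨a, rfl⟩
        · rcases parity_cases j with ⟨b, rfl⟩ | ⟨b, rfl⟩
          · rw [wn_bpair_even, wn_bpair_even] at hij
            rw [wk_bpair_even, wk_bpair_even]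
            exact h1 a b hij
          · rw [wk_bpair_odd, hc]
            exact wordComparable_nil_right _
        · rw [wk_bpair_odd, hc]
          exact wordComparable_nil_left _
      · obtain ⟨i, hi1, hi2⟩ := h2 m
        exact ⟨2 * i, by rw [wn_bpair_even]; exact hi1, by rw [wk_bpair_even]; exact hi2⟩
  · intro h1 h2
    show Classical.epsilon _ = Classical.epsilon _
    congr 1
    funext y
    apply propext
    constructor
    · intro h i hi
      have := h (2 * i)
      rw [wn_bpair_even, wk_bpair_even] at this
      exact this hi
    · intro h i hi
      rcases parity_cases i with ⟨a, rfl⟩ | ⟨a, rfl⟩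
      · rw [wn_bpair_even] at hi; rw [wk_bpair_even]
        exact h a hi
      · rw [wk_bpair_odd, hc]
        exact isPrefixOf_nil y

end Aux2
noncomputable section Aux3

open scoped Classical

/-- Inert entries encoding the oracle `p`. -/
def ppent (p : Baire) : Baire := fun n => cpair (p n) 0

lemma wk_ppent (p : Baire) (n : ℕ) : wk (ppent p) n = [] := by
  unfold wk ppent
  rw [cunpair_cpair]
  exact word_zero

/-- The discontinuity function for the cone: diagonal fixed point with `p` smuggled in. -/
def Dfun (p q : Baire) : Baire := fixp (bpair q (ppent p))

lemma U_Dfun (p q : Baire) : U (Dfun p q) = Phi q (Dfun p q) := by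
  unfold U Dfun
  rw [evens_fixp, odds_fixp]
  exact Phi_bpair_inert q (ppent p) _ (wk_ppent p)

lemma Dfun_entry (p q : Baire) (n : ℕ) : Dfun p q (4 * n + 2) = cpair (p n) 0 := by
  unfold Dfun
  have h1 : (4 * n + 2) % 2 = 0 := by omega
  rw [fixp_even h1]
  have h2 : (4 * n + 2) / 2 = 2 * n + 1 := by omega
  rw [h2, bpair_odd]
  rfl

/-- The code transform `x ↦ x̃` making `Φ_x̃` total with value `U x` wherever `U x` converges. -/
def tilde (x : Baire) : Baire := fun i =>
  if IsPrefixOf (wn (evens x) i) (odds x) then cpair 0 ((cunpair (x (2 * i))).2)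
  else cpair 0 0

lemma evens_apply (x : Baire) (i : ℕ) : evens x i = x (2 * i) := rfl

lemma wn_tilde (x : Baire) (i : ℕ) : wn (tilde x) i = [] := by
  unfold wn tilde
  split <;> rw [cunpair_cpair] <;> exact word_zero

lemma wk_tilde_sel {x : Baire} {i : ℕ} (h : IsPrefixOf (wn (evens x) i) (odds x)) :
    wk (tilde x) i = wk (evens x) i := by
  unfold wk tilde
  rw [if_pos h, cunpair_cpair]
  rfl

lemma wk_tilde_unsel {x : Baire} {i : ℕ} (h : ¬ IsPrefixOf (wn (evens x) i) (odds x)) :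
    wk (tilde x) i = [] := by
  unfold wk tilde
  rw [if_neg h, cunpair_cpair]
  exact word_zero

/-- If `U x` converges then `Φ_{x̃}` is total with the same value. -/
lemma tilde_spec (x : Baire) (hU : (U x).Dom) (y : Baire) :
    (U x).get hU ∈ Phi (tilde x) y := by
  obtain ⟨hcon, hunb⟩ := hU
  have hdom : (Phi (tilde x) y).Dom := by
    refine ⟨fun i j _ => ?_, fun m => ?_⟩
    · by_cases hi : IsPrefixOf (wn (evens x) i) (odds x)
      · by_cases hj : IsPrefixOf (wn (evens x) j) (odds x)
        · rw [wk_tilde_sel hi, wk_tilde_sel hj]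
          exact hcon i j (prefixes_comparable hi hj)
        · rw [wk_tilde_unsel hj]
          exact wordComparable_nil_right _
      · rw [wk_tilde_unsel hi]
        exact wordComparable_nil_left _
    · obtain ⟨i, hi1, hi2⟩ := hunb m
      refine ⟨i, by rw [wn_tilde]; exact isPrefixOf_nil y, ?_⟩
      rw [wk_tilde_sel hi1]
      exact hi2
  refine ⟨hdom, ?_⟩
  show Classical.epsilon _ = Classical.epsilon _
  congr 1
  funext z
  apply propext
  constructor
  · intro h i hi
    have := h i (by rw [wn_tilde]; exact isPrefixOf_nil y)
    rwa [wk_tilde_sel hi] at this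
  · intro h i _
    by_cases hi : IsPrefixOf (wn (evens x) i) (odds x)
    · rw [wk_tilde_sel hi]
      exact h i hi
    · rw [wk_tilde_unsel hi]
      exact isPrefixOf_nil z

lemma DIS_nonempty (x : Baire) : (DIS x).Nonempty := by
  by_cases h : (U x).Dom
  · refine ⟨fun n => (U x).get h n + 1, fun hmem => ?_⟩
    have := Part.get_eq_of_mem hmem h
    have := congrFun this 0
    omega
  · exact ⟨fun _ => 0, fun hmem => h hmem.fst⟩

end Aux3
noncomputable section Aux4

/-- Generic "read coordinate `a*n+b`, postprocess with `g`" functions are approximable. -/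
lemma selector_spec (g : ℕ → ℕ) (a b : ℕ) (ha : 0 < a) (hb : b < a) :
    MonotoneWord (fun v : List ℕ => (List.range (v.length / a)).map fun k => g (v.getD (a * k + b) 0)) ∧
    Approximates (fun v : List ℕ => (List.range (v.length / a)).map fun k => g (v.getD (a * k + b) 0))
      (fun x => Part.some fun n => g (x (a * n + b))) := by
  have hpos : ∀ (L k : ℕ), k < L / a → a * k + b < L := by
    intro L k hk
    have h1 : a * (k + 1) ≤ a * (L / a) := Nat.mul_le_mul_left a hk
    have h2 : a * (L / a) ≤ L := by rw [mul_comm]; exact Nat.div_mul_le_self L a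
    have h3 : a * (k + 1) = a * k + a := by ring
    omega
  constructor
  · intro u v huv
    apply mapRange_prefix (Nat.div_le_div_right huv.length_le)
    intro k hk
    congr 1
    exact listPrefix_getD huv (hpos _ _ hk)
  · intro x _
    constructor
    · intro v hv
      show IsPrefixOf _ (fun n => g (x (a * n + b)))
      apply isPrefixOf_mapRange
      intro k hk
      congr 1
      exact hv.getD_eq (hpos _ _ hk)
    · intro m
      refine ⟨(List.range (a * (m + 1))).map x, isPrefixOf_mapRange fun _ _ => rfl, ?_⟩
      simp only [List.length_map, List.length_range]
      rw [Nat.mul_div_cancel_left _ ha]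
      omega

/-- The oracle extraction map. -/
def extractF : Baire →. Baire := fun x => Part.some fun n => invtri (x (4 * n + 2))

lemma computable_extractF : ComputablePF extractF := by
  refine ⟨fun v : List ℕ => (List.range (v.length / 4)).map fun k => invtri (v.getD (4 * k + 2) 0),
    ?_, (selector_spec invtri 4 2 (by omega) (by omega)).1,
    (selector_spec invtri 4 2 (by omega) (by omega)).2⟩
  apply Primrec.to_comp
  have hinv : Primrec invtri := by
    unfold invtri
    exact Primrec.nat_div.comp
      (Primrec.nat_sub.comp
        (Primrec.nat_sqrt.comp
          (Primrec.nat_add.comp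
            (Primrec.nat_mul.comp (Primrec.const 8) Primrec.id) (Primrec.const 1)))
        (Primrec.const 1))
      (Primrec.const 2)
  have hidx : Primrec (fun k : ℕ => 4 * k + 2) :=
    Primrec.nat_add.comp (Primrec.nat_mul.comp (Primrec.const 4) Primrec.id) (Primrec.const 2)
  have hgetD : Primrec₂ (fun (v : List ℕ) (k : ℕ) => invtri (v.getD (4 * k + 2) 0)) := by
    have : Primrec (fun pr : List ℕ × ℕ => invtri (pr.1.getD (4 * pr.2 + 2) 0)) :=
      hinv.comp ((Primrec.list_getD 0).comp Primrec.fst (hidx.comp Primrec.snd))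
    exact this
  exact Primrec.list_map
    (Primrec.list_range.comp (Primrec.nat_div.comp Primrec.list_length (Primrec.const 4)))
    hgetD

lemma turingLe_Dfun (p q : Baire) : TuringLe p (Dfun p q) := by
  refine ⟨extractF, computable_extractF, Part.mem_some_iff.mpr ?_⟩
  funext n
  rw [Dfun_entry, invtri_cpair]

end Aux4
noncomputable section Aux5

open scoped Classical

/-- Extend a finite word by zeros. -/
def extw (v : List ℕ) : Baire := fun n => v.getD n 0

lemma isPrefixOf_extw (v : List ℕ) : IsPrefixOf v (extw v) := by
  unfold IsPrefixOf
  apply List.ext_getElem (by simp)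
  intro i h1 h2
  simp only [List.getElem_map, List.getElem_range, extw]
  exact (List.getD_eq_getElem v 0 h1).symm

/-- The stability predicate used to build the modulus. -/
def stab (F : Baire → Baire) (v : List ℕ) (L : ℕ) : Prop :=
  ∀ x : Baire, IsPrefixOf v x → ∀ n < L, F x n = F (extw v) n

lemma stab_zero (F : Baire → Baire) (v : List ℕ) : stab F v 0 := by
  intro x _ n hn
  omega

/-- The modulus. -/
def modN (F : Baire → Baire) (v : List ℕ) : ℕ :=
  Nat.findGreatest (stab F v) v.length

lemma stab_modN (F : Baire → Baire) (v : List ℕ) : stab F v (modN F v) :=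
  Nat.findGreatest_spec (Nat.zero_le _) (stab_zero F v)

/-- Every continuous total map on Baire space has a monotone word approximation. -/
lemma contPF_of_continuous (F : Baire → Baire) (hF : Continuous F) :
    ContinuousPF (fun x => Part.some (F x)) := by
  refine ⟨fun v => (List.range (modN F v)).map (F (extw v)), ?_, ?_⟩
  · -- monotone
    intro u v huv
    have key : ∀ n < modN F u, F (extw v) n = F (extw u) n := by
      intro n hn
      exact stab_modN F u (extw v) (prefix_trans_isPrefixOf huv (isPrefixOf_extw v)) n hn
    have hle : modN F u ≤ modN F v := by
      apply Nat.le_findGreatest (le_trans (Nat.findGreatest_le _) huv.length_le)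
      intro x hx n hn
      rw [stab_modN F u x (prefix_trans_isPrefixOf huv hx) n hn]
      exact (key n hn).symm
    exact mapRange_prefix hle fun n hn => (key n hn).symm
  · intro x _
    constructor
    · intro v hv
      show IsPrefixOf _ (F x)
      apply isPrefixOf_mapRange
      intro n hn
      exact (stab_modN F v x hv n hn).symm
    · -- unboundedness via continuity
      intro m
      have hopen : ∀ n : ℕ, ∃ I : Finset ℕ, ∀ y : Baire, (∀ a ∈ I, y a = x a) → F y n = F x n := by
        intro n
        have hcont : Continuous fun y : Baire => F y n := (continuous_apply n).comp hF
        have hopen : IsOpen {y : Baire | F y n = F x n} := by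
          have : {y : Baire | F y n = F x n} = (fun y : Baire => F y n) ⁻¹' {F x n} := rfl
          rw [this]
          exact hcont.isOpen_preimage _ (isOpen_discrete _)
        obtain ⟨I, u, hIu, hsub⟩ := isOpen_pi_iff.mp hopen x rfl
        refine ⟨I, fun y hy => hsub fun a ha => ?_⟩
        rw [hy a ha]
        exact (hIu a ha).2
      choose I hI using hopen
      set B : ℕ := (Finset.range (m + 1)).sup (fun n => (I n).sup id) with hB
      set L : ℕ := m + 1 + B + 1 with hL
      set v : List ℕ := (List.range L).map x with hv
      have hvx : IsPrefixOf v x := isPrefixOf_mapRange fun _ _ => rfl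
      have hvlen : v.length = L := by simp [hv]
      have hagree : ∀ y : Baire, IsPrefixOf v y → ∀ n < m + 1, F y n = F x n := by
        intro y hy n hn
        apply hI n
        intro a ha
        have ha2 : a ≤ B := le_trans (Finset.le_sup (f := id) ha)
          (Finset.le_sup (f := fun n => (I n).sup id) (Finset.mem_range.mpr hn))
        have haL : a < v.length := by omega
        have h1 : v.getD a 0 = y a := hy.getD_eq haL
        have h2 : v.getD a 0 = x a := hvx.getD_eq haL
        rw [← h1, h2]
      have hstab : stab F v (m + 1) := by
        intro y hy n hn
        rw [hagree y hy n hn, ← hagree (extw v) (isPrefixOf_extw v) n hn]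
      have hmod : m + 1 ≤ modN F v := Nat.le_findGreatest (by omega) hstab
      refine ⟨v, hvx, ?_⟩
      simp only [List.length_map, List.length_range]
      omega

end Aux5
noncomputable section Aux6

open scoped Classical

lemma continuous_Dfun (p : Baire) : Continuous (Dfun p) := by
  apply continuous_pi
  intro n
  obtain ⟨m, hm⟩ := fixp_coord n
  have : (fun q : Baire => Dfun p q n) = fun q => bpair q (ppent p) m := by
    funext q
    exact hm _
  rw [this]
  unfold bpair
  by_cases h : m % 2 = 0
  · simp only [h, if_true]
    exact continuous_apply _
  · simp only [h, if_false]
    exact continuous_const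

lemma continuous_odds : Continuous odds := by
  apply continuous_pi
  intro n
  exact continuous_apply _

lemma isPrefixOf_congr {u : List ℕ} {y z : Baire} (h : ∀ j < u.length, y j = z j) :
    IsPrefixOf u y ↔ IsPrefixOf u z := by
  unfold IsPrefixOf
  rw [List.map_congr_left (fun j hj => h j (List.mem_range.mp hj))]

lemma continuous_tilde : Continuous tilde := by
  apply continuous_pi
  intro i
  rw [continuous_iff_continuousAt]
  intro x₀
  rw [ContinuousAt, nhds_discrete (α := ℕ), Filter.tendsto_pure]
  set u : List ℕ := wn (evens x₀) i with hu
  set V : Set Baire := {x | x (2 * i) = x₀ (2 * i) ∧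
    ∀ j < u.length, x (2 * j + 1) = x₀ (2 * j + 1)} with hV
  have hVopen : IsOpen V := by
    have : V = ((fun x : Baire => x (2 * i)) ⁻¹' {x₀ (2 * i)}) ∩
        ⋂ j ∈ Finset.range u.length,
          ((fun x : Baire => x (2 * j + 1)) ⁻¹' {x₀ (2 * j + 1)}) := by
      ext x
      simp [hV, Set.mem_iInter, Finset.mem_range]
    rw [this]
    apply IsOpen.inter
    · exact (continuous_apply _).isOpen_preimage _ (isOpen_discrete _)
    · apply isOpen_biInter_finset
      intro j _
      exact (continuous_apply _).isOpen_preimage _ (isOpen_discrete _)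
  have hx₀V : x₀ ∈ V := ⟨rfl, fun _ _ => rfl⟩
  apply Filter.eventually_of_mem (hVopen.mem_nhds hx₀V)
  intro x hx
  obtain ⟨hx1, hx2⟩ := hx
  have hwn : wn (evens x) i = u := by
    rw [hu]
    unfold wn
    rw [evens_apply, evens_apply, hx1]
  have hsel : IsPrefixOf (wn (evens x) i) (odds x) ↔ IsPrefixOf u (odds x₀) := by
    rw [hwn]
    exact isPrefixOf_congr fun j hj => hx2 j hj
  show tilde x i = tilde x₀ i
  unfold tilde
  by_cases hc : IsPrefixOf u (odds x₀)
  · rw [if_pos (hsel.mpr hc), if_pos hc, hx1]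
  · rw [if_neg (fun hh => hc (hsel.mp hh)), if_neg hc]

end Aux6

/-- `DIS ≤*_W DIS|_[p]`; in particular the restriction of `DIS` to the Turing cone
`[p] = {q : p ≤_T q}` is effectively discontinuous. -/
theorem DIS_cone_effectively_discontinuous (p : Baire) :
    ContWeihrauchRed DIS (fun q => {r | TuringLe p q ∧ r ∈ DIS q}) ∧
    EffectivelyDiscontinuous (fun q => {r | TuringLe p q ∧ r ∈ DIS q}) := by
  constructor
  · -- continuous Weihrauch reduction
    refine ⟨fun r => Part.some (odds r), fun x => Part.some (Dfun p (tilde x)),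
      contPF_of_continuous odds continuous_odds,
      contPF_of_continuous _ ((continuous_Dfun p).comp continuous_tilde), ?_⟩
    intro G hG x _
    obtain ⟨r, hr⟩ := DIS_nonempty (Dfun p (tilde x))
    have hfs : ((fun q => {r | TuringLe p q ∧ r ∈ DIS q}) (Dfun p (tilde x))).Nonempty :=
      ⟨r, turingLe_Dfun p (tilde x), hr⟩
    obtain ⟨hGdom, hGmem⟩ := hG _ hfs
    have htDIS : (G (Dfun p (tilde x))).get hGdom ∉ U (Dfun p (tilde x)) := hGmem.2
    have htx : (G (Dfun p (tilde x))).get hGdom ∈ DIS x := by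
      intro hmem
      have hUdom : (U x).Dom := hmem.fst
      have hval : (U x).get hUdom ∈ Phi (tilde x) (Dfun p (tilde x)) :=
        tilde_spec x hUdom (Dfun p (tilde x))
      rw [← U_Dfun p (tilde x)] at hval
      have heq : (U x).get hUdom = (G (Dfun p (tilde x))).get hGdom :=
        Part.get_eq_of_mem hmem hUdom
      rw [heq] at hval
      exact htDIS hval
    have hmm : (G (Dfun p (tilde x))).get hGdom ∈
        (Part.some (Dfun p (tilde x))).bind fun s =>
          (G s).bind fun t => Part.some (odds (bpair x t)) := by
      refine Part.mem_bind_iff.mpr ⟨Dfun p (tilde x), Part.mem_some _,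
        Part.mem_bind_iff.mpr ⟨(G (Dfun p (tilde x))).get hGdom, Part.get_mem hGdom, ?_⟩⟩
      exact Part.mem_some_iff.mpr (odds_bpair x _ ▸ rfl)
    obtain ⟨hdom, hget⟩ := hmm
    exact ⟨hdom, by rw [hget]; exact htx⟩
  · -- effective discontinuity
    refine ⟨Dfun p, continuous_Dfun p, fun q => ⟨?_, ?_⟩⟩
    · obtain ⟨r, hr⟩ := DIS_nonempty (Dfun p q)
      exact ⟨r, turingLe_Dfun p q, hr⟩
    · intro y hy hmem
      rw [← U_Dfun p q] at hy
      exact hmem.2 hy
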